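/- arXiv:2307.15549 — 2 statements merged into one kernel-verified Lean document; each statement's English description precedes it below -/
import Mathlib

section
/- Soundness of context-aware separation logic (CASL): assume that for every command com the predicate transformer ⟦com⟧ satisfies locality (⟦com⟧(a⋆b) ⊑ ⟦com⟧(a)⋆b for all a,b) and that the context-aware transformer ⟦com⟧_c satisfies mediation for every context c (⟦com⟧(a⋆c) ⊑ ⟦com⟧_c(a)⋆c for all predicates a). Then every derivable CASL judgment ⊢ ⟨c⟩{a} st {b} is valid, i.e. ⟦st⟧(a⋆c) ⊑ b⋆c. -/
universe u

/-- Predicates over states: sets of states together with a top element `⊤`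
indicating failure of a computation. -/
abbrev Preds (σ : Type u) : Type u := WithTop (Set σ)

/-- A separation algebra: a cancellative partial commutative monoid `(Σ, ⋆, emp)`
with a set of units `emp` such that every state has a unit and the multiplication
of two distinct units is undefined. -/
structure SepAlgebra (σ : Type u) where
  /-- The partial multiplication; `none` means undefined. -/
  mult : σ → σ → Option σ
  mult_comm : ∀ s t, mult s t = mult t s
  mult_assoc : ∀ s t u,
    (mult s t).bind (fun v => mult v u) = (mult t u).bind (fun v => mult s v)
  cancel : ∀ s₁ s₂ t u, mult s₁ t = some u → mult s₂ t = some u → s₁ = s₂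
  /-- The set of units. -/
  emp : Set σ
  unit_exists : ∀ s, ∃ e ∈ emp, mult s e = some s
  unit_undef : ∀ e₁ ∈ emp, ∀ e₂ ∈ emp, e₁ ≠ e₂ → mult e₁ e₂ = none

variable {σ : Type u}

/-- Separating conjunction, lifted to predicates (`⊤` is absorbing). -/
def SepAlgebra.star (A : SepAlgebra σ) (a b : Preds σ) : Preds σ :=
  WithTop.recTopCoe ⊤
    (fun a' => WithTop.recTopCoe ⊤
      (fun b' => (({u | ∃ s ∈ a', ∃ t ∈ b', A.mult s t = some u} : Set σ) : Preds σ)) b) a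

/-- Sequential programs over a set `C` of commands. -/
inductive Stmt (C : Type*) where
  | com : C → Stmt C
  | choice : Stmt C → Stmt C → Stmt C
  | seq : Stmt C → Stmt C → Stmt C
  | loop : Stmt C → Stmt C

variable {C : Type*}

/-- Denotational semantics of programs, derived from a semantics of commands:
choice is join, sequencing is composition, iteration is the join of the iterates. -/
noncomputable def denote (sem : C → Preds σ → Preds σ) : Stmt C → Preds σ → Preds σ
  | .com c => sem c
  | .choice st₁ st₂ => fun a => denote sem st₁ a ⊔ denote sem st₂ a
  | .seq st₁ st₂ => fun a => denote sem st₂ (denote sem st₁ a)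
  | .loop st => fun a => ⨆ i : ℕ, (denote sem st)^[i] a


/-- The context-aware separation logic (CASL) proof system. Judgments
`CASLDeriv A casem c a st b` formalize `⟨c⟩ {a} st {b}`. -/
inductive CASLDeriv (A : SepAlgebra σ) (casem : C → Preds σ → Preds σ → Preds σ) :
    Preds σ → Preds σ → Stmt C → Preds σ → Prop
  | com {c : C} {ctx a b : Preds σ} :
      casem c ctx a ≤ b → CASLDeriv A casem ctx a (.com c) b
  | consequence {ctx a a' b b' : Preds σ} {st : Stmt C} :
      a ≤ a' → b' ≤ b → CASLDeriv A casem ctx a' st b' → CASLDeriv A casem ctx a st b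
  | seq {ctx a b d : Preds σ} {st₁ st₂ : Stmt C} :
      CASLDeriv A casem ctx a st₁ b → CASLDeriv A casem ctx b st₂ d →
      CASLDeriv A casem ctx a (.seq st₁ st₂) d
  | choice {ctx a b : Preds σ} {st₁ st₂ : Stmt C} :
      CASLDeriv A casem ctx a st₁ b → CASLDeriv A casem ctx a st₂ b →
      CASLDeriv A casem ctx a (.choice st₁ st₂) b
  | loop {ctx a : Preds σ} {st : Stmt C} :
      CASLDeriv A casem ctx a st a → CASLDeriv A casem ctx a (.loop st) a
  | frame {ctx a b d : Preds σ} {st : Stmt C} :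
      CASLDeriv A casem ctx a st b →
      CASLDeriv A casem ctx (A.star a d) st (A.star b d)
  | context {ctx a b d : Preds σ} {st : Stmt C} :
      CASLDeriv A casem (A.star ctx d) a st b →
      CASLDeriv A casem ctx (A.star a d) st (A.star b d)
  | widen {ctx a b d : Preds σ} {st : Stmt C} :
      CASLDeriv A casem ctx (A.star a d) st (A.star b d) →
      CASLDeriv A casem (A.star ctx d) a st b

section Aux

lemma Preds.le_sSup' {S : Set (Preds σ)} {x} (hx : x ∈ S) : x ≤ sSup S :=
  (WithTop.isLUB_sSup' ⟨x, hx⟩).1 hx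

lemma Preds.sSup_le' {S : Set (Preds σ)} {y} (hne : S.Nonempty)
    (h : ∀ x ∈ S, x ≤ y) : sSup S ≤ y :=
  (WithTop.isLUB_sSup' hne).2 h

lemma Preds.le_iSup' {ι : Sort*} (f : ι → Preds σ) (i : ι) : f i ≤ ⨆ j, f j :=
  Preds.le_sSup' ⟨i, rfl⟩

lemma Preds.iSup_le' {ι : Sort*} [Nonempty ι] {f : ι → Preds σ} {y}
    (h : ∀ i, f i ≤ y) : ⨆ i, f i ≤ y :=
  Preds.sSup_le' (Set.range_nonempty f) (by rintro x ⟨i, rfl⟩; exact h i)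

lemma star_top_left' (A : SepAlgebra σ) (b : Preds σ) : A.star ⊤ b = ⊤ := rfl

lemma star_top_right' (A : SepAlgebra σ) (a : Preds σ) : A.star a ⊤ = ⊤ := by
  cases a <;> rfl

lemma star_coe' (A : SepAlgebra σ) (a b : Set σ) :
    A.star (a : Preds σ) (b : Preds σ) =
      (({u | ∃ s ∈ a, ∃ t ∈ b, A.mult s t = some u} : Set σ) : Preds σ) := rfl

lemma star_mono' (A : SepAlgebra σ) {a a' b b' : Preds σ} (ha : a ≤ a') (hb : b ≤ b') :
    A.star a b ≤ A.star a' b' := by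
  induction a' using WithTop.recTopCoe with
  | top => rw [star_top_left']; exact le_top
  | coe a' =>
    induction b' using WithTop.recTopCoe with
    | top => rw [star_top_right']; exact le_top
    | coe b' =>
      obtain ⟨a₀, rfl, ha₀⟩ := WithTop.le_coe_iff.mp ha
      obtain ⟨b₀, rfl, hb₀⟩ := WithTop.le_coe_iff.mp hb
      rw [star_coe', star_coe', WithTop.coe_le_coe]
      rintro u ⟨s, hs, t, ht, h⟩
      exact ⟨s, ha₀ hs, t, hb₀ ht, h⟩

lemma star_comm' (A : SepAlgebra σ) (a b : Preds σ) : A.star a b = A.star b a := by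
  induction a using WithTop.recTopCoe with
  | top => rw [star_top_left', star_top_right']
  | coe a =>
    induction b using WithTop.recTopCoe with
    | top => rw [star_top_left', star_top_right']
    | coe b =>
      rw [star_coe', star_coe', WithTop.coe_inj]
      ext u
      constructor <;> rintro ⟨s, hs, t, ht, h⟩ <;>
        exact ⟨t, ht, s, hs, by rw [A.mult_comm]; exact h⟩

lemma star_assoc' (A : SepAlgebra σ) (a b c : Preds σ) :
    A.star (A.star a b) c = A.star a (A.star b c) := by
  induction a using WithTop.recTopCoe with
  | top => rw [star_top_left', star_top_left', star_top_left']
  | coe a =>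
    induction b using WithTop.recTopCoe with
    | top => rw [star_top_right', star_top_left', star_top_right']
    | coe b =>
      induction c using WithTop.recTopCoe with
      | top => rw [star_top_right', star_top_right', star_top_right']
      | coe c =>
        rw [star_coe' A a b, star_coe' A b c, star_coe', star_coe', WithTop.coe_inj]
        ext u
        constructor
        · rintro ⟨v, ⟨s, hs, t, ht, hst⟩, w, hw, hvw⟩
          have := A.mult_assoc s t w
          rw [hst] at this
          simp only [Option.bind_some] at this
          rw [hvw] at this
          obtain ⟨x, hx1, hx2⟩ := Option.bind_eq_some_iff.mp this.symm
          exact ⟨s, hs, x, ⟨t, ht, w, hw, hx1⟩, hx2⟩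
        · rintro ⟨s, hs, x, ⟨t, ht, w, hw, htw⟩, hsx⟩
          have := A.mult_assoc s t w
          rw [htw] at this
          simp only [Option.bind_some] at this
          rw [hsx] at this
          obtain ⟨v, hv1, hv2⟩ := Option.bind_eq_some_iff.mp this
          exact ⟨v, ⟨s, hs, t, ht, hv1⟩, w, hw, hv2⟩

variable {C : Type*}

lemma sem_mono' (sem : C → Preds σ → Preds σ)
    (hjoin : ∀ (c : C) (P : Set (Preds σ)), sem c (sSup P) = ⨆ a ∈ P, sem c a)
    (c : C) {a b : Preds σ} (hab : a ≤ b) : sem c a ≤ sem c b := by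
  have h1 : sSup ({a, b} : Set (Preds σ)) = b := by
    apply le_antisymm
    · exact Preds.sSup_le' ⟨a, by simp⟩ (by rintro x (rfl | rfl); exacts [hab, le_rfl])
    · exact Preds.le_sSup' (by simp)
  have h := hjoin c {a, b}
  rw [h1] at h
  rw [h]
  calc sem c a ≤ ⨆ _ : a ∈ ({a, b} : Set (Preds σ)), sem c a :=
        Preds.le_iSup' _ (by simp)
    _ ≤ ⨆ x ∈ ({a, b} : Set (Preds σ)), sem c x :=
        Preds.le_iSup' (fun x => ⨆ _ : x ∈ ({a, b} : Set (Preds σ)), sem c x) a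

lemma denote_mono' (sem : C → Preds σ → Preds σ)
    (hjoin : ∀ (c : C) (P : Set (Preds σ)), sem c (sSup P) = ⨆ a ∈ P, sem c a)
    (st : Stmt C) : ∀ {a b : Preds σ}, a ≤ b → denote sem st a ≤ denote sem st b := by
  induction st with
  | com c => exact fun h => sem_mono' sem hjoin c h
  | choice st₁ st₂ ih₁ ih₂ => exact fun h => sup_le_sup (ih₁ h) (ih₂ h)
  | seq st₁ st₂ ih₁ ih₂ => exact fun h => ih₂ (ih₁ h)
  | loop st ih =>
    intro a b h
    refine Preds.iSup_le' fun i => le_trans ?_ (Preds.le_iSup' _ i)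
    induction i with
    | zero => exact h
    | succ n ihn => rw [Function.iterate_succ_apply', Function.iterate_succ_apply']; exact ih ihn

lemma denote_local' (A : SepAlgebra σ) (sem : C → Preds σ → Preds σ)
    (hjoin : ∀ (c : C) (P : Set (Preds σ)), sem c (sSup P) = ⨆ a ∈ P, sem c a)
    (hlocal : ∀ (c : C) (a b : Preds σ), sem c (A.star a b) ≤ A.star (sem c a) b)
    (st : Stmt C) : ∀ (a d : Preds σ),
      denote sem st (A.star a d) ≤ A.star (denote sem st a) d := by
  induction st with
  | com c => exact fun a d => hlocal c a d
  | choice st₁ st₂ ih₁ ih₂ =>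
    intro a d
    exact sup_le (le_trans (ih₁ a d) (star_mono' A le_sup_left le_rfl))
      (le_trans (ih₂ a d) (star_mono' A le_sup_right le_rfl))
  | seq st₁ st₂ ih₁ ih₂ =>
    intro a d
    exact le_trans (denote_mono' sem hjoin st₂ (ih₁ a d)) (ih₂ _ d)
  | loop st ih =>
    intro a d
    refine Preds.iSup_le' fun i => ?_
    have : (denote sem st)^[i] (A.star a d) ≤ A.star ((denote sem st)^[i] a) d := by
      induction i with
      | zero => exact le_rfl
      | succ n ihn =>
        rw [Function.iterate_succ_apply', Function.iterate_succ_apply']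
        exact le_trans (denote_mono' sem hjoin st ihn) (ih _ d)
    exact le_trans this (star_mono' A (Preds.le_iSup' _ i) le_rfl)

end Aux

/-- Soundness of context-aware separation logic (CASL).
If every command satisfies locality and every context-aware transformer satisfies
mediation, then every derivable CASL judgment `⟨c⟩{a} st {b}` is valid, i.e.
`⟦st⟧(a⋆c) ⊑ b⋆c`. -/
theorem soundness_of_casl (A : SepAlgebra σ) (sem : C → Preds σ → Preds σ)
    (casem : C → Preds σ → Preds σ → Preds σ)
    (hstrict : ∀ c : C, sem c ⊤ = ⊤)
    (hjoin : ∀ (c : C) (P : Set (Preds σ)), sem c (sSup P) = ⨆ a ∈ P, sem c a)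
    (hlocal : ∀ (c : C) (a b : Preds σ), sem c (A.star a b) ≤ A.star (sem c a) b)
    (hmediation : ∀ (c : C) (ctx a : Preds σ),
      sem c (A.star a ctx) ≤ A.star (casem c ctx a) ctx)
    {ctx a b : Preds σ} {st : Stmt C} (h : CASLDeriv A casem ctx a st b) :
    denote sem st (A.star a ctx) ≤ A.star b ctx := by
  induction h with
  | com hc => exact le_trans (hmediation _ _ _) (star_mono' A hc le_rfl)
  | consequence ha hb _ ih =>
    exact le_trans (denote_mono' sem hjoin _ (star_mono' A ha le_rfl))
      (le_trans ih (star_mono' A hb le_rfl))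
  | @seq _ _ _ _ st₁ st₂ _ _ ih₁ ih₂ =>
    exact le_trans (denote_mono' sem hjoin st₂ ih₁) ih₂
  | choice _ _ ih₁ ih₂ => exact sup_le ih₁ ih₂
  | loop _ ih =>
    refine Preds.iSup_le' fun i => ?_
    induction i with
    | zero => exact le_rfl
    | succ n ihn =>
      rw [Function.iterate_succ_apply']
      exact le_trans (denote_mono' sem hjoin _ ihn) ih
  | @frame ctx' a' b' d st' _ ih =>
    calc denote sem st' (A.star (A.star a' d) ctx')
        = denote sem st' (A.star (A.star a' ctx') d) := by
          rw [star_assoc', star_assoc', star_comm' A d ctx']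
      _ ≤ A.star (denote sem st' (A.star a' ctx')) d :=
          denote_local' A sem hjoin hlocal st' _ d
      _ ≤ A.star (A.star b' ctx') d := star_mono' A ih le_rfl
      _ = A.star (A.star b' d) ctx' := by
          rw [star_assoc', star_assoc', star_comm' A d ctx']
  | @context ctx' a' b' d st' _ ih =>
    rw [star_assoc', star_comm' A d ctx', star_assoc' A b', star_comm' A d ctx']
    exact ih
  | @widen ctx' a' b' d st' _ ih =>
    rw [star_comm' A ctx' d, ← star_assoc', ← star_assoc']
    exact ih
end

section
/- Partial fixed-point computation (Bekić-style): let h₁ = (X₁, E₁, in₁) and h₂ = (X₂, E₂, in₂) be flow graphs with h₁ ⋆ h₂ defined. Define, for cval : X₂ → M, the inflow in_cval : (ℕ∖X₁) × X₁ → M by in_cval(x,y) = E₂(x,y)(cval(x)) if x ∈ X₂ and in_cval(x,y) = (h₁⋆h₂).in(x,y) otherwise, and define f : (X₂ → M) → (X₂ → M) by f(cval)(x) = Σ_{z∉X₁∪X₂} (h₁⋆h₂).in(z,x) + tf(h₁)(in_cval)(x) + Σ_{y∈X₂} E₂(y,x)(cval(y)). Then f is monotone and continuous with respect to the pointwise natural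 order, and h₂.flow = lfp(f) = ⨆_{i∈ℕ} fⁱ(⊥). Furthermore, if compatible_⪯(h₁⋆h₂) holds for a relation ⪯ on M, then f is monotone with respect to the pointwise lifting of ⪯. -/
universe u

/-- A flow monoid: a commutative monoid whose natural order
(`m ≤ n ↔ ∃ o, n = m + o`) is a partial order that forms an ω-cpo, with
continuous addition. `csup` assigns to every ascending chain its join. -/
class FlowMonoid (M : Type u) extends AddCommMonoid M, PartialOrder M, IsOrderedAddMonoid M,
    CanonicallyOrderedAdd M where
  /-- The join of an ascending chain. -/
  csup : (ℕ → M) → M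
  isLUB_csup : ∀ K : ℕ → M, Monotone K → IsLUB (Set.range K) (csup K)
  add_csup : ∀ (n : M) (K : ℕ → M), Monotone K → n + csup K = csup fun i => n + K i

variable {M : Type u} [FlowMonoid M]

/-- Continuity: `f` commutes with joins of ascending chains. -/
def FMCont (f : M → M) : Prop :=
  ∀ K : ℕ → M, Monotone K →
    IsLUB (Set.range fun i => f (K i)) (f (FlowMonoid.csup K))

/-- A flow graph: a finite set of nodes `X ⊆ ℕ`, continuous edge functions, and
a finitely supported inflow from sources outside `X` into `X`. (The edge
functions of sources outside `X` and the inflow outside its domain are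
canonically zero.) -/
structure FlowGraph (M : Type u) [FlowMonoid M] where
  /-- The nodes. -/
  X : Finset ℕ
  /-- The edge functions: `E x y` labels the edge from `x` to `y`. -/
  E : ℕ → ℕ → M → M
  /-- The inflow: `inflow y x` is the flow the graph receives at `x ∈ X` from the
  external node `y ∉ X`. -/
  inflow : ℕ → ℕ → M
  econt : ∀ x y, x ∈ X → FMCont (E x y)
  edom : ∀ x y, x ∉ X → E x y = fun _ => 0
  inflow_fin : ∀ x, (Function.support fun y => inflow y x).Finite
  inflow_dom : ∀ y x, inflow y x ≠ 0 → y ∉ X ∧ x ∈ X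

namespace FlowGraph

/-- One step of the flow fixed-point computation, with inflow `i`. -/
noncomputable def stepWith (h : FlowGraph M) (i : ℕ → ℕ → M) (c : ℕ → M) : ℕ → M :=
  fun x => if x ∈ h.X then (∑ᶠ y, i y x) + ∑ y ∈ h.X, h.E y x (c y) else 0

/-- The flow for a custom inflow `i`, obtained by Kleene iteration: the least
function satisfying the flow equation. -/
noncomputable def flowWith (h : FlowGraph M) (i : ℕ → ℕ → M) : ℕ → M :=
  fun x => FlowMonoid.csup fun n => (h.stepWith i)^[n] (fun _ => 0) x

/-- The flow of a flow graph. -/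
noncomputable def flow (h : FlowGraph M) : ℕ → M := h.flowWith h.inflow

/-- The outflow of a flow graph: `out x y = E x y (flow x)`. -/
noncomputable def out (h : FlowGraph M) (x y : ℕ) : M := h.E x y (h.flow x)

/-- The transfer function: maps an inflow `i` to the resulting outflow at `y`. -/
noncomputable def tf (h : FlowGraph M) (i : ℕ → ℕ → M) (y : ℕ) : M :=
  ∑ x ∈ h.X, h.E x y (h.flowWith i x)

/-- The ghost multiplication of flow graphs: disjoint union of the node sets and
edges; the inflow of each component is restricted to sources outside the other. -/
def gmul (s t : FlowGraph M) : FlowGraph M where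
  X := s.X ∪ t.X
  E := fun x y => if x ∈ s.X then s.E x y else t.E x y
  inflow := fun y x => if y ∈ s.X ∪ t.X then 0 else s.inflow y x + t.inflow y x
  econt := by
    intro x y hx
    try dsimp only
    by_cases hs : x ∈ s.X
    · rw [if_pos hs]; exact s.econt x y hs
    · rw [if_neg hs]
      rcases Finset.mem_union.mp hx with h | h
      · exact absurd h hs
      · exact t.econt x y h
  edom := by
    intro x y hx
    try dsimp only
    rw [if_neg fun h => hx (Finset.mem_union_left _ h)]
    exact t.edom x y fun h => hx (Finset.mem_union_right _ h)
  inflow_fin := by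
    intro x
    refine Set.Finite.subset ((s.inflow_fin x).union (t.inflow_fin x)) ?_
    intro y hy
    rw [Function.mem_support] at hy
    try dsimp only at hy
    by_cases hmem : y ∈ s.X ∪ t.X
    · rw [if_pos hmem] at hy; exact absurd rfl hy
    · rw [if_neg hmem] at hy
      by_cases h1 : s.inflow y x = 0
      · have h2 : t.inflow y x ≠ 0 := fun h2 => hy (by rw [h1, h2, add_zero])
        exact Set.mem_union_right _ (Function.mem_support.mpr h2)
      · exact Set.mem_union_left _ (Function.mem_support.mpr h1)
  inflow_dom := by
    intro y x hy
    try dsimp only at hy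
    by_cases hmem : y ∈ s.X ∪ t.X
    · rw [if_pos hmem] at hy; exact absurd rfl hy
    · rw [if_neg hmem] at hy
      refine ⟨hmem, ?_⟩
      by_cases h1 : s.inflow y x = 0
      · have h2 : t.inflow y x ≠ 0 := fun h2 => hy (by rw [h1, h2, add_zero])
        exact Finset.mem_union_right _ (t.inflow_dom y x h2).2
      · exact Finset.mem_union_left _ (s.inflow_dom y x h1).2

/-- Definedness of the multiplication `s ⋆ t` of flow graphs: the ghost
multiplication is defined, the inflow expectation of each graph at the mutual
boundary matches the outflow of the other, and the flows are preserved in the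
composition (whose result is then `gmul s t`). -/
def MDef (s t : FlowGraph M) : Prop :=
  Disjoint s.X t.X ∧
  (∀ x ∈ s.X, ∀ y ∈ t.X, s.out x y = t.inflow x y ∧ t.out y x = s.inflow y x) ∧
  (∀ x ∈ s.X, (gmul s t).flow x = s.flow x) ∧
  (∀ y ∈ t.X, (gmul s t).flow y = t.flow y)

end FlowGraph

/-- The pointwise join of an ascending chain of functions `X → M`. -/
noncomputable def chainJoin {X : Finset ℕ} (Ch : ℕ → ({x : ℕ // x ∈ X} → M)) :
    {x : ℕ // x ∈ X} → M :=
  fun x => FlowMonoid.csup fun i => Ch i x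

/-- `≤`-continuity of a function on `X → M`: it commutes with joins of
pointwise-ascending chains. -/
def ContOn (X : Finset ℕ)
    (f : ({x : ℕ // x ∈ X} → M) → ({x : ℕ // x ∈ X} → M)) : Prop :=
  ∀ Ch : ℕ → ({x : ℕ // x ∈ X} → M), (∀ i x, Ch i x ≤ Ch (i + 1) x) →
    ∀ x, IsLUB (Set.range fun i => f (Ch i) x) (f (chainJoin Ch) x)

/-- Pointwise `≤`-monotonicity of a function on `X → M`. -/
def MonoOn (X : Finset ℕ)
    (f : ({x : ℕ // x ∈ X} → M) → ({x : ℕ // x ∈ X} → M)) : Prop :=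
  ∀ c d : {x : ℕ // x ∈ X} → M, (∀ x, c x ≤ d x) → ∀ x, f c x ≤ f d x

/-- Pointwise `⪯`-monotonicity of a function on `X → M`. -/
def RMonoOn (r : M → M → Prop) (X : Finset ℕ)
    (f : ({x : ℕ // x ∈ X} → M) → ({x : ℕ // x ∈ X} → M)) : Prop :=
  ∀ c d : {x : ℕ // x ∈ X} → M, (∀ x, r (c x) (d x)) → ∀ x, r (f c x) (f d x)

/-- The join of the Kleene chain `⨆ᵢ fⁱ(⊥)` of a function on `X → M`
(`⊥` is the constant-0 function); for continuous `f` this is `lfp(f)`. -/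
noncomputable def kleeneOn {X : Finset ℕ}
    (f : ({x : ℕ // x ∈ X} → M) → ({x : ℕ // x ∈ X} → M)) : {x : ℕ // x ∈ X} → M :=
  fun x => FlowMonoid.csup fun i => (f^[i] fun _ => 0) x

/-- Condition (C4): for all `≤`-continuous, pointwise-`⪯`-monotone functions
`f, g` on `X → M` with `fⁱ(⊥)` pointwise-`⪯` `gⁱ(⊥)` for all `i` and
`lfp(f)` pointwise-`⪯` `g(lfp(f))`, one has `⨆ᵢ fⁱ(⊥)` pointwise-`⪯` `⨆ᵢ gⁱ(⊥)`. -/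
def C4 (r : M → M → Prop) (X : Finset ℕ) : Prop :=
  ∀ f g : ({x : ℕ // x ∈ X} → M) → ({x : ℕ // x ∈ X} → M),
    ContOn X f → ContOn X g → RMonoOn r X f → RMonoOn r X g →
    (∀ (i : ℕ) (x : {x : ℕ // x ∈ X}), r ((f^[i] fun _ => 0) x) ((g^[i] fun _ => 0) x)) →
    (∀ x, r (kleeneOn f x) (g (kleeneOn f) x)) →
    ∀ x, r (kleeneOn f x) (kleeneOn g x)

/-- `compatible_⪯(h)`: conditions (C1)–(C4) of the relation `⪯` with respect to
the flow graph `h`. -/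
def Compatible (r : M → M → Prop) (h : FlowGraph M) : Prop :=
  -- (C1) transitive and `0 ⪯ 0`
  (∀ m n o : M, r m n → r n o → r m o) ∧ r 0 0 ∧
  -- (C2) compatible with addition
  (∀ m n o : M, r m n → r (m + o) (n + o)) ∧
  -- (C3) the edge functions of `h` are `⪯`-monotone
  (∀ x y : ℕ, x ∈ h.X → ∀ m n : M, r m n → r (h.E x y m) (h.E x y n)) ∧
  -- (C4)
  C4 r h.X

namespace FlowMonoid

lemma le_csup {K : ℕ → M} (hK : Monotone K) (i : ℕ) : K i ≤ csup K :=
  (isLUB_csup K hK).1 ⟨i, rfl⟩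

lemma csup_le {K : ℕ → M} (hK : Monotone K) {c : M} (h : ∀ i, K i ≤ c) : csup K ≤ c :=
  (isLUB_csup K hK).2 (by rintro _ ⟨i, rfl⟩; exact h i)

lemma csup_mono {K L : ℕ → M} (hK : Monotone K) (hL : Monotone L) (h : ∀ i, K i ≤ L i) :
    csup K ≤ csup L :=
  csup_le hK fun i => (h i).trans (le_csup hL i)

lemma csup_const (c : M) : csup (fun _ => c) = c :=
  le_antisymm (csup_le monotone_const fun _ => le_rfl) (le_csup monotone_const 0)

lemma _root_.FMCont.mono {f : M → M} (hf : FMCont f) : Monotone f := by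
  intro m n hmn
  set K : ℕ → M := fun i => if i = 0 then m else n with hKdef
  have hK : Monotone K := by
    intro a b hab
    by_cases ha : a = 0
    · by_cases hb : b = 0 <;> simp [K, ha, hb, hmn]
    · have hb : b ≠ 0 := by omega
      simp [K, ha, hb]
  have h1 : IsLUB (Set.range fun i => f (K i)) (f (csup K)) := hf K hK
  have h2 : csup K = n := by
    refine (isLUB_csup K hK).unique ?_
    constructor
    · rintro _ ⟨i, rfl⟩; by_cases hi : i = 0 <;> simp [K, hi, hmn]
    · intro b hb; exact hb ⟨1, by simp [K]⟩
  rw [h2] at h1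
  exact h1.1 ⟨0, by simp [K]⟩

lemma _root_.FMCont.map_csup {f : M → M} (hf : FMCont f) {K : ℕ → M} (hK : Monotone K) :
    f (csup K) = csup fun i => f (K i) :=
  ((isLUB_csup _ fun a b hab => hf.mono (hK hab)).unique (hf K hK)).symm

lemma csup_add {K L : ℕ → M} (hK : Monotone K) (hL : Monotone L) :
    csup K + csup L = csup fun i => K i + L i := by
  have hKL : Monotone fun i => K i + L i := fun a b h => add_le_add (hK h) (hL h)
  apply le_antisymm
  · have h1 : csup K + csup L = csup fun i => csup L + K i := by
      rw [add_comm]; exact add_csup _ _ hK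
    rw [h1]
    refine csup_le (fun a b h => add_le_add le_rfl (hK h)) fun i => ?_
    have h2 : csup L + K i = csup fun j => K i + L j := by
      rw [add_comm]; exact add_csup _ _ hL
    rw [h2]
    refine csup_le (fun a b h => add_le_add le_rfl (hL h)) fun j => ?_
    calc K i + L j ≤ K (max i j) + L (max i j) :=
          add_le_add (hK (le_max_left i j)) (hL (le_max_right i j))
      _ ≤ _ := le_csup hKL (max i j)
  · exact csup_le hKL fun i => add_le_add (le_csup hK i) (le_csup hL i)

lemma csup_finset_sum {α : Type*} (s : Finset α) (K : ℕ → α → M)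
    (hK : ∀ a, Monotone (fun i => K i a)) :
    ∑ a ∈ s, csup (fun i => K i a) = csup fun i => ∑ a ∈ s, K i a := by
  classical
  induction s using Finset.induction with
  | empty => simp [csup_const]
  | @insert _ _ ha ih =>
      rw [Finset.sum_insert ha, ih,
        csup_add (hK _) (fun a b h => Finset.sum_le_sum fun y _ => hK y h)]
      simp [Finset.sum_insert ha]

lemma csup_diag (a : ℕ → ℕ → M) (h1 : ∀ m, Monotone (a m))
    (h2 : ∀ n, Monotone fun m => a m n) :
    csup (fun n => csup (a n)) = csup fun k => a k k := by
  have hdiag : Monotone fun k => a k k := fun i j hij => (h1 i hij).trans (h2 j hij)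
  have houter : Monotone fun n => csup (a n) :=
    fun i j hij => csup_mono (h1 i) (h1 j) fun n => h2 n hij
  apply le_antisymm
  · refine csup_le houter fun n => csup_le (h1 n) fun m => ?_
    calc a n m ≤ a (max n m) (max n m) :=
          (h2 m (le_max_left n m)).trans (h1 _ (le_max_right n m))
      _ ≤ _ := le_csup hdiag (max n m)
  · exact csup_le hdiag fun k => (le_csup (h1 k) k).trans (le_csup houter k)

lemma csup_swap (a : ℕ → ℕ → M) (h1 : ∀ m, Monotone (a m))
    (h2 : ∀ n, Monotone fun m => a m n) :
    csup (fun n => csup (a n)) = csup fun m => csup fun n => a n m := by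
  rw [csup_diag a h1 h2, csup_diag (fun m n => a n m) h2 h1]

end FlowMonoid
section Kleene

open FlowMonoid

variable {ι : Type*}

/-- Pointwise monotonicity on `ι → M`. -/
def PMono (F : (ι → M) → ι → M) : Prop :=
  ∀ c d : ι → M, (∀ x, c x ≤ d x) → ∀ x, F c x ≤ F d x

/-- Pointwise chain. -/
def PChain (Ch : ℕ → ι → M) : Prop := ∀ n x, Ch n x ≤ Ch (n + 1) x

lemma PChain.mono {Ch : ℕ → ι → M} (h : PChain Ch) (x : ι) :
    Monotone fun n => Ch n x :=
  monotone_nat_of_le_succ fun n => h n x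

/-- Continuity on `ι → M` (equational form). -/
def PCont (F : (ι → M) → ι → M) : Prop :=
  ∀ Ch : ℕ → ι → M, PChain Ch →
    ∀ x, F (fun y => csup fun n => Ch n y) x = csup fun n => F (Ch n) x

noncomputable def kl (F : (ι → M) → ι → M) : ι → M :=
  fun x => csup fun n => (F^[n] fun _ => 0) x

lemma iter_chain {F : (ι → M) → ι → M} (hm : PMono F) :
    PChain fun n => F^[n] fun _ => 0 := by
  intro n
  induction n with
  | zero => intro x; exact zero_le
  | succ n ih =>
      intro x
      show F^[n + 1] (fun _ => 0) x ≤ F^[n + 1 + 1] (fun _ => 0) x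
      rw [Function.iterate_succ_apply', Function.iterate_succ_apply']
      exact hm _ _ ih x

lemma iter_le_iter {F G : (ι → M) → ι → M} (hmG : PMono G)
    (hFG : ∀ c x, F c x ≤ G c x) :
    ∀ n x, (F^[n] fun _ => 0) x ≤ (G^[n] fun _ => 0) x := by
  intro n
  induction n with
  | zero => intro x; exact le_rfl
  | succ n ih =>
      intro x
      rw [Function.iterate_succ_apply', Function.iterate_succ_apply']
      exact (hFG _ x).trans (hmG _ _ ih x)

lemma kl_fixed {F : (ι → M) → ι → M} (hm : PMono F) (hc : PCont F) (x : ι) :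
    F (kl F) x = kl F x := by
  have hch := iter_chain hm
  have h1 : F (kl F) x = csup fun n => (F^[n + 1] fun _ => 0) x := by
    rw [show kl F = fun y => csup fun n => (F^[n] fun _ => 0) y from rfl, hc _ hch x]
    exact congrArg csup (funext fun n =>
      (congrFun (Function.iterate_succ_apply' F n _) x).symm)
  rw [h1]
  have hshift : Monotone fun n => (F^[n + 1] fun _ => 0) x :=
    monotone_nat_of_le_succ fun n => hch (n + 1) x
  apply le_antisymm
  · exact csup_le hshift fun n => le_csup (hch.mono x) (n + 1)
  · exact csup_le (hch.mono x) fun n => (hch n x).trans (le_csup hshift n)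

lemma kl_least {F : (ι → M) → ι → M} (hm : PMono F) {c : ι → M}
    (hc : ∀ x, F c x ≤ c x) (x : ι) : kl F x ≤ c x := by
  refine csup_le ((iter_chain hm).mono x) fun n => ?_
  induction n generalizing x with
  | zero => exact zero_le
  | succ n ih =>
      rw [Function.iterate_succ_apply']
      exact (hm _ _ ih x).trans (hc x)

lemma kl_le_kl {F G : (ι → M) → ι → M} (hmF : PMono F) (hmG : PMono G)
    (hFG : ∀ c x, F c x ≤ G c x) (x : ι) : kl F x ≤ kl G x :=
  csup_mono ((iter_chain hmF).mono x) ((iter_chain hmG).mono x) fun n => iter_le_iter hmG hFG n x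

end Kleene
namespace FlowGraph

open FlowMonoid

variable {M : Type u} [FlowMonoid M]

lemma E_mono (h : FlowGraph M) (y x : ℕ) : Monotone (h.E y x) := by
  by_cases hy : y ∈ h.X
  · exact (h.econt y x hy).mono
  · rw [h.edom y x hy]; exact monotone_const

lemma stepWith_mono (h : FlowGraph M) (i : ℕ → ℕ → M) : PMono (h.stepWith i) := by
  intro c d hcd x
  unfold stepWith
  by_cases hx : x ∈ h.X
  · rw [if_pos hx, if_pos hx]
    exact add_le_add le_rfl (Finset.sum_le_sum fun y _ => h.E_mono y x (hcd y))
  · rw [if_neg hx]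
    exact zero_le

lemma stepWith_cont (h : FlowGraph M) (i : ℕ → ℕ → M) : PCont (h.stepWith i) := by
  intro Ch hCh x
  unfold stepWith
  by_cases hx : x ∈ h.X
  · simp only [if_pos hx]
    have h1 : ∀ y ∈ h.X, h.E y x (csup fun n => Ch n y) = csup fun n => h.E y x (Ch n y) :=
      fun y hy => (h.econt y x hy).map_csup (hCh.mono y)
    rw [Finset.sum_congr rfl h1,
      csup_finset_sum h.X (fun n y => h.E y x (Ch n y))
        (fun y => (h.E_mono y x).comp (hCh.mono y)),
      add_csup _ _ (fun a b hab =>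
        Finset.sum_le_sum fun y _ => h.E_mono y x (hCh.mono y hab))]
  · simp only [if_neg hx, csup_const]

lemma flowWith_eq_kl (h : FlowGraph M) (i : ℕ → ℕ → M) :
    h.flowWith i = kl (h.stepWith i) := rfl

/-- The flow equation. -/
lemma flowWith_fixed (h : FlowGraph M) (i : ℕ → ℕ → M) (x : ℕ) :
    h.stepWith i (h.flowWith i) x = h.flowWith i x :=
  kl_fixed (h.stepWith_mono i) (h.stepWith_cont i) x

lemma flowWith_least (h : FlowGraph M) (i : ℕ → ℕ → M) {c : ℕ → M}
    (hc : ∀ x, h.stepWith i c x ≤ c x) (x : ℕ) : h.flowWith i x ≤ c x :=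
  kl_least (h.stepWith_mono i) hc x

lemma stepWith_iter_zero (h : FlowGraph M) (i : ℕ → ℕ → M) :
    ∀ (n : ℕ) {x : ℕ}, x ∉ h.X → ((h.stepWith i)^[n] fun _ => 0) x = 0 := by
  intro n
  induction n with
  | zero => intro x _; rfl
  | succ n ih =>
      intro x hx
      rw [Function.iterate_succ_apply']
      unfold stepWith
      rw [if_neg hx]

end FlowGraph
section Bekic

open FlowMonoid FlowGraph

variable {M : Type u} [FlowMonoid M]

/-- The canonical `inC`. -/
def inCd (h₁ h₂ : FlowGraph M) (cval : {x : ℕ // x ∈ h₂.X} → M) : ℕ → ℕ → M :=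
  fun x y => if hx : x ∈ h₂.X then h₂.E x y (cval ⟨x, hx⟩) else (gmul h₁ h₂).inflow x y

/-- The canonical `f`. -/
noncomputable def fd (h₁ h₂ : FlowGraph M) (cval : {x : ℕ // x ∈ h₂.X} → M) :
    {x : ℕ // x ∈ h₂.X} → M :=
  fun x => (∑ᶠ z, (gmul h₁ h₂).inflow z x.1) + h₁.tf (inCd h₁ h₂ cval) x.1 +
    ∑ y ∈ h₂.X.attach, h₂.E y.1 x.1 (cval y)

/-- Embedding of a partial valuation on `h₂.X` over a total one. -/
def emb (h₂ : FlowGraph M) (cval : {x : ℕ // x ∈ h₂.X} → M) (c : ℕ → M) : ℕ → M :=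
  fun y => if h : y ∈ h₂.X then cval ⟨y, h⟩ else c y

variable (h₁ h₂ : FlowGraph M)

lemma gmul_inflow_zero {z : ℕ} (x : ℕ) (hz : z ∈ h₁.X ∪ h₂.X) :
    (gmul h₁ h₂).inflow z x = 0 := by
  by_contra h
  exact ((gmul h₁ h₂).inflow_dom z x h).1 hz

lemma finsum_inCd (cval : {x : ℕ // x ∈ h₂.X} → M) (x : ℕ) :
    ∑ᶠ z, inCd h₁ h₂ cval z x
      = (∑ y ∈ h₂.X.attach, h₂.E y.1 x (cval y)) + ∑ᶠ z, (gmul h₁ h₂).inflow z x := by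
  classical
  have hsplit : ∀ z, inCd h₁ h₂ cval z x
      = (if hz : z ∈ h₂.X then h₂.E z x (cval ⟨z, hz⟩) else 0)
        + (gmul h₁ h₂).inflow z x := by
    intro z
    unfold inCd
    by_cases hz : z ∈ h₂.X
    · rw [dif_pos hz, dif_pos hz,
        gmul_inflow_zero h₁ h₂ x (Finset.mem_union_right _ hz), add_zero]
    · rw [dif_neg hz, dif_neg hz, zero_add]
  have hsupp : (Function.support fun z =>
      if hz : z ∈ h₂.X then h₂.E z x (cval ⟨z, hz⟩) else 0) ⊆ ↑h₂.X := by
    intro z hz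
    rw [Function.mem_support] at hz
    by_cases h : z ∈ h₂.X
    · exact h
    · exact absurd (dif_neg h) hz
  rw [finsum_congr hsplit,
    finsum_add_distrib (Set.Finite.subset h₂.X.finite_toSet hsupp)
      ((gmul h₁ h₂).inflow_fin x),
    finsum_eq_sum_of_support_subset _ hsupp]
  congr 1
  rw [← Finset.sum_attach h₂.X fun z => if hz : z ∈ h₂.X then h₂.E z x (cval ⟨z, hz⟩) else 0]
  exact Finset.sum_congr rfl fun y _ => by rw [dif_pos y.2]

variable {h₁ h₂} (hdisj : Disjoint h₁.X h₂.X)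
include hdisj

lemma step_bridge (cval : {x : ℕ // x ∈ h₂.X} → M) (c : ℕ → M) {x : ℕ} (hx : x ∈ h₁.X) :
    h₁.stepWith (inCd h₁ h₂ cval) c x
      = (gmul h₁ h₂).stepWith (gmul h₁ h₂).inflow (emb h₂ cval c) x := by
  classical
  unfold stepWith
  rw [if_pos hx, if_pos (show x ∈ (gmul h₁ h₂).X from Finset.mem_union_left _ hx)]
  have hsum : ∑ y ∈ (gmul h₁ h₂).X, (gmul h₁ h₂).E y x (emb h₂ cval c y)
      = (∑ y ∈ h₁.X, h₁.E y x (c y)) + ∑ y ∈ h₂.X.attach, h₂.E y.1 x (cval y) := by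
    show ∑ y ∈ h₁.X ∪ h₂.X, _ = _
    rw [Finset.sum_union hdisj]
    congr 1
    · refine Finset.sum_congr rfl fun y hy => ?_
      show (if y ∈ h₁.X then h₁.E y x else h₂.E y x) (emb h₂ cval c y) = _
      rw [if_pos hy]
      unfold emb
      rw [dif_neg (Finset.disjoint_left.mp hdisj hy)]
    · rw [← Finset.sum_attach h₂.X fun y => (gmul h₁ h₂).E y x (emb h₂ cval c y)]
      refine Finset.sum_congr rfl fun y _ => ?_
      show (if y.1 ∈ h₁.X then h₁.E y.1 x else h₂.E y.1 x) (emb h₂ cval c y.1) = _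
      rw [if_neg (Finset.disjoint_right.mp hdisj y.2)]
      unfold emb
      rw [dif_pos y.2]
  rw [hsum, finsum_inCd]
  abel

lemma fgen_bridge (cval : {x : ℕ // x ∈ h₂.X} → M) (c : ℕ → M) {x : ℕ} (hx : x ∈ h₂.X) :
    (∑ᶠ z, (gmul h₁ h₂).inflow z x) + (∑ z ∈ h₁.X, h₁.E z x (c z))
        + ∑ y ∈ h₂.X.attach, h₂.E y.1 x (cval y)
      = (gmul h₁ h₂).stepWith (gmul h₁ h₂).inflow (emb h₂ cval c) x := by
  classical
  unfold stepWith
  rw [if_pos (show x ∈ (gmul h₁ h₂).X from Finset.mem_union_right _ hx)]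
  have hsum : ∑ y ∈ (gmul h₁ h₂).X, (gmul h₁ h₂).E y x (emb h₂ cval c y)
      = (∑ y ∈ h₁.X, h₁.E y x (c y)) + ∑ y ∈ h₂.X.attach, h₂.E y.1 x (cval y) := by
    show ∑ y ∈ h₁.X ∪ h₂.X, _ = _
    rw [Finset.sum_union hdisj]
    congr 1
    · refine Finset.sum_congr rfl fun y hy => ?_
      show (if y ∈ h₁.X then h₁.E y x else h₂.E y x) (emb h₂ cval c y) = _
      rw [if_pos hy]
      unfold emb
      rw [dif_neg (Finset.disjoint_left.mp hdisj hy)]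
    · rw [← Finset.sum_attach h₂.X fun y => (gmul h₁ h₂).E y x (emb h₂ cval c y)]
      refine Finset.sum_congr rfl fun y _ => ?_
      show (if y.1 ∈ h₁.X then h₁.E y.1 x else h₂.E y.1 x) (emb h₂ cval c y.1) = _
      rw [if_neg (Finset.disjoint_right.mp hdisj y.2)]
      unfold emb
      rw [dif_pos y.2]
  rw [hsum]
  abel

lemma fd_bridge (cval : {x : ℕ // x ∈ h₂.X} → M) (x : {x : ℕ // x ∈ h₂.X}) :
    fd h₁ h₂ cval x
      = (gmul h₁ h₂).stepWith (gmul h₁ h₂).inflow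
          (emb h₂ cval (h₁.flowWith (inCd h₁ h₂ cval))) x.1 := by
  rw [← fgen_bridge hdisj cval (h₁.flowWith (inCd h₁ h₂ cval)) x.2]
  rfl

end Bekic
section Bekic2

open FlowMonoid FlowGraph

variable {M : Type u} [FlowMonoid M] {h₁ h₂ : FlowGraph M}

lemma inner_step_mono (cval cval' : {x : ℕ // x ∈ h₂.X} → M)
    (hcc : ∀ x, cval x ≤ cval' x) (c : ℕ → M) (x : ℕ) :
    h₁.stepWith (inCd h₁ h₂ cval) c x ≤ h₁.stepWith (inCd h₁ h₂ cval') c x := by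
  unfold FlowGraph.stepWith
  by_cases hx : x ∈ h₁.X
  · rw [if_pos hx, if_pos hx]
    refine add_le_add ?_ le_rfl
    rw [finsum_inCd h₁ h₂ cval x, finsum_inCd h₁ h₂ cval' x]
    exact add_le_add (Finset.sum_le_sum fun y _ => h₂.E_mono y.1 x (hcc y)) le_rfl
  · simp only [if_neg hx]
    exact le_rfl

lemma inner_iter_mono (cval cval' : {x : ℕ // x ∈ h₂.X} → M)
    (hcc : ∀ x, cval x ≤ cval' x) (n : ℕ) (x : ℕ) :
    ((h₁.stepWith (inCd h₁ h₂ cval))^[n] fun _ => 0) x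
      ≤ ((h₁.stepWith (inCd h₁ h₂ cval'))^[n] fun _ => 0) x :=
  iter_le_iter (h₁.stepWith_mono _) (inner_step_mono cval cval' hcc) n x

lemma inner_flow_mono (cval cval' : {x : ℕ // x ∈ h₂.X} → M)
    (hcc : ∀ x, cval x ≤ cval' x) (x : ℕ) :
    h₁.flowWith (inCd h₁ h₂ cval) x ≤ h₁.flowWith (inCd h₁ h₂ cval') x :=
  kl_le_kl (h₁.stepWith_mono _) (h₁.stepWith_mono _) (inner_step_mono cval cval' hcc) x

lemma emb_csup (Chv : ℕ → {x : ℕ // x ∈ h₂.X} → M) (D : ℕ → ℕ → M) :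
    emb h₂ (fun y => csup fun m => Chv m y) (fun y => csup fun m => D m y)
      = fun y => csup fun m => emb h₂ (Chv m) (D m) y := by
  funext y
  by_cases hy : y ∈ h₂.X <;> simp [emb, hy]

variable (hdisj : Disjoint h₁.X h₂.X)
include hdisj

lemma inner_iter_cont (Ch : ℕ → {x : ℕ // x ∈ h₂.X} → M) (hCh : PChain Ch) :
    ∀ n x, ((h₁.stepWith (inCd h₁ h₂ fun y => csup fun m => Ch m y))^[n] fun _ => 0) x
      = csup fun m => ((h₁.stepWith (inCd h₁ h₂ (Ch m)))^[n] fun _ => 0) x := by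
  intro n
  induction n with
  | zero => intro x; exact (csup_const 0).symm
  | succ n ih =>
      intro x
      set D : ℕ → ℕ → M := fun m => (h₁.stepWith (inCd h₁ h₂ (Ch m)))^[n] fun _ => 0 with hD
      have hDch : PChain D := fun m y =>
        inner_iter_mono (Ch m) (Ch (m + 1)) (fun z => hCh m z) n y
      have hrw : (h₁.stepWith (inCd h₁ h₂ fun y => csup fun m => Ch m y))^[n] (fun _ => 0)
          = fun y => csup fun m => D m y := funext ih
      rw [Function.iterate_succ_apply', hrw]
      by_cases hx : x ∈ h₁.X
      · have hembch : PChain fun m => emb h₂ (Ch m) (D m) := by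
          intro m y
          show emb h₂ (Ch m) (D m) y ≤ emb h₂ (Ch (m + 1)) (D (m + 1)) y
          by_cases hy : y ∈ h₂.X
          · simp only [emb, dif_pos hy]; exact hCh m _
          · simp only [emb, dif_neg hy]; exact hDch m y
        rw [step_bridge hdisj _ _ hx, emb_csup, (gmul h₁ h₂).stepWith_cont _ _ hembch x]
        refine congrArg csup (funext fun m => ?_)
        rw [← step_bridge hdisj (Ch m) (D m) hx]
        exact (congrFun (Function.iterate_succ_apply'
          (h₁.stepWith (inCd h₁ h₂ (Ch m))) n fun _ => 0) x).symm
      · have h0 : ∀ (i : ℕ → ℕ → M) (c : ℕ → M), h₁.stepWith i c x = 0 := fun i c => by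
          unfold FlowGraph.stepWith; rw [if_neg hx]
        rw [h0]
        refine ((csup_const 0).symm).trans (congrArg csup (funext fun m => ?_))
        rw [Function.iterate_succ_apply', h0]

lemma inner_cont (Ch : ℕ → {x : ℕ // x ∈ h₂.X} → M) (hCh : PChain Ch) (x : ℕ) :
    h₁.flowWith (inCd h₁ h₂ fun y => csup fun m => Ch m y) x
      = csup fun m => h₁.flowWith (inCd h₁ h₂ (Ch m)) x := by
  unfold FlowGraph.flowWith
  rw [congrArg csup (funext fun n => inner_iter_cont hdisj Ch hCh n x)]
  exact csup_swap _
    (fun n => monotone_nat_of_le_succ fun m =>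
      inner_iter_mono (Ch m) (Ch (m + 1)) (fun z => hCh m z) n x)
    (fun m => (iter_chain (h₁.stepWith_mono _)).mono x)

omit hdisj

lemma fd_mono : MonoOn h₂.X (fd h₁ h₂) := by
  intro c d hcd x
  unfold fd FlowGraph.tf
  refine add_le_add (add_le_add le_rfl ?_) ?_
  · exact Finset.sum_le_sum fun z _ => h₁.E_mono z x.1 (inner_flow_mono c d hcd z)
  · exact Finset.sum_le_sum fun y _ => h₂.E_mono y.1 x.1 (hcd y)

include hdisj

lemma fd_cont_eq (Ch : ℕ → {x : ℕ // x ∈ h₂.X} → M) (hCh : PChain Ch)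
    (x : {x : ℕ // x ∈ h₂.X}) :
    fd h₁ h₂ (fun y => csup fun m => Ch m y) x = csup fun m => fd h₁ h₂ (Ch m) x := by
  unfold fd FlowGraph.tf
  have h1 : ∀ z ∈ h₁.X, h₁.E z x.1 (h₁.flowWith (inCd h₁ h₂ fun y => csup fun m => Ch m y) z)
      = csup fun m => h₁.E z x.1 (h₁.flowWith (inCd h₁ h₂ (Ch m)) z) := fun z hz => by
    rw [inner_cont hdisj Ch hCh z,
      (h₁.econt z x.1 hz).map_csup (monotone_nat_of_le_succ fun m =>
        inner_flow_mono (Ch m) (Ch (m + 1)) (fun y => hCh m y) z)]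
  have h2 : ∀ y ∈ h₂.X.attach, h₂.E y.1 x.1 (csup fun m => Ch m y)
      = csup fun m => h₂.E y.1 x.1 (Ch m y) := fun y hy => by
    by_cases hmem : y.1 ∈ h₂.X
    · exact (h₂.econt y.1 x.1 hmem).map_csup (hCh.mono y)
    · exact absurd y.2 hmem
  have hTmono : ∀ z, Monotone fun m => h₁.E z x.1 (h₁.flowWith (inCd h₁ h₂ (Ch m)) z) :=
    fun z => monotone_nat_of_le_succ fun m =>
      h₁.E_mono z x.1 (inner_flow_mono (Ch m) (Ch (m + 1)) (fun y => hCh m y) z)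
  have hSmono : ∀ (y : {x : ℕ // x ∈ h₂.X}), Monotone fun m => h₂.E y.1 x.1 (Ch m y) :=
    fun y => monotone_nat_of_le_succ fun m => h₂.E_mono y.1 x.1 (hCh m y)
  rw [Finset.sum_congr rfl h1, Finset.sum_congr rfl h2,
    csup_finset_sum h₁.X _ hTmono, csup_finset_sum h₂.X.attach _ hSmono,
    add_csup _ _ (fun a b hab => Finset.sum_le_sum fun z _ => hTmono z hab),
    csup_add
      (fun a b hab => add_le_add le_rfl (Finset.sum_le_sum fun z _ => hTmono z hab))
      (fun a b hab => Finset.sum_le_sum fun y _ => hSmono y hab)]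

end Bekic2
section Bekic3

open FlowMonoid FlowGraph

variable {M : Type u} [FlowMonoid M] {h₁ h₂ : FlowGraph M}

lemma flow_fixed (h : FlowGraph M) (y : ℕ) :
    h.stepWith h.inflow h.flow y = h.flow y :=
  flowWith_fixed h h.inflow y

lemma fd_pmono : PMono (fd h₁ h₂) := fd_mono

variable (hdisj : Disjoint h₁.X h₂.X)
include hdisj

lemma fd_pcont : PCont (fd h₁ h₂) := fun Ch hCh x => fd_cont_eq hdisj Ch hCh x

lemma fd_fixed (x : {x : ℕ // x ∈ h₂.X}) :
    fd h₁ h₂ (kl (fd h₁ h₂)) x = kl (fd h₁ h₂) x :=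
  kl_fixed fd_pmono (fd_pcont hdisj) x

lemma emb_flow (c : {x : ℕ // x ∈ h₂.X} → M) (hc : ∀ y, c y = (gmul h₁ h₂).flow y.1) :
    emb h₂ c (gmul h₁ h₂).flow = (gmul h₁ h₂).flow := by
  funext w
  unfold emb
  by_cases hw : w ∈ h₂.X
  · rw [dif_pos hw]; exact hc ⟨w, hw⟩
  · rw [dif_neg hw]

omit hdisj

lemma bekic (hmul : MDef h₁ h₂) (x : {x : ℕ // x ∈ h₂.X}) :
    h₂.flow x.1 = kl (fd h₁ h₂) x := by
  obtain ⟨hdisj, -, -, hfl₂⟩ := hmul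
  rw [← hfl₂ x.1 x.2]
  show (gmul h₁ h₂).flowWith (gmul h₁ h₂).inflow x.1 = kl (fd h₁ h₂) x
  apply le_antisymm
  · -- flow of the composition is below the extension of `kl (fd h₁ h₂)`
    refine le_of_le_of_eq
      (flowWith_least (gmul h₁ h₂) (gmul h₁ h₂).inflow (c :=
        emb h₂ (kl (fd h₁ h₂)) (h₁.flowWith (inCd h₁ h₂ (kl (fd h₁ h₂))))) ?_ x.1) ?_
    · intro y
      by_cases hy2 : y ∈ h₂.X
      · rw [← fd_bridge hdisj (kl (fd h₁ h₂)) ⟨y, hy2⟩, fd_fixed hdisj]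
        show kl (fd h₁ h₂) ⟨y, hy2⟩ ≤ emb h₂ _ _ y
        unfold emb
        rw [dif_pos hy2]
      · by_cases hy1 : y ∈ h₁.X
        · rw [← step_bridge hdisj (kl (fd h₁ h₂)) _ hy1,
            flowWith_fixed h₁ (inCd h₁ h₂ (kl (fd h₁ h₂))) y]
          show h₁.flowWith _ y ≤ emb h₂ _ _ y
          unfold emb
          rw [dif_neg hy2]
        · have h0 : (gmul h₁ h₂).stepWith (gmul h₁ h₂).inflow
              (emb h₂ (kl (fd h₁ h₂)) (h₁.flowWith (inCd h₁ h₂ (kl (fd h₁ h₂))))) y = 0 := by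
            unfold FlowGraph.stepWith
            rw [if_neg (by
              intro hy
              rcases Finset.mem_union.mp hy with h | h
              exacts [hy1 h, hy2 h])]
          rw [h0]
          exact zero_le
    · show emb h₂ _ _ x.1 = _
      unfold emb
      rw [dif_pos x.2]
  · -- `kl (fd h₁ h₂)` is below the flow of the composition
    have hinner : ∀ z, h₁.flowWith (inCd h₁ h₂ fun y => (gmul h₁ h₂).flow y.1) z
        ≤ (gmul h₁ h₂).flow z := by
      intro z
      refine flowWith_least h₁ _ (fun y => ?_) z
      by_cases hy1 : y ∈ h₁.X
      · rw [step_bridge hdisj _ _ hy1, emb_flow hdisj _ (fun _ => rfl), flow_fixed]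
      · unfold FlowGraph.stepWith
        rw [if_neg hy1]
        exact zero_le
    refine kl_least fd_pmono (c := fun y => (gmul h₁ h₂).flow y.1) (fun x' => ?_) x
    calc fd h₁ h₂ (fun y => (gmul h₁ h₂).flow y.1) x'
        ≤ (∑ᶠ z, (gmul h₁ h₂).inflow z x'.1) + (∑ z ∈ h₁.X, h₁.E z x'.1 ((gmul h₁ h₂).flow z))
            + ∑ y ∈ h₂.X.attach, h₂.E y.1 x'.1 ((gmul h₁ h₂).flow y.1) := by
          unfold fd FlowGraph.tf
          exact add_le_add (add_le_add le_rfl (Finset.sum_le_sum fun z _ =>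
            h₁.E_mono z x'.1 (hinner z))) le_rfl
      _ = (gmul h₁ h₂).stepWith (gmul h₁ h₂).inflow
            (emb h₂ (fun y => (gmul h₁ h₂).flow y.1) (gmul h₁ h₂).flow) x'.1 :=
          fgen_bridge hdisj _ _ x'.2
      _ = (gmul h₁ h₂).flow x'.1 := by
          rw [emb_flow hdisj _ (fun _ => rfl), flow_fixed]

end Bekic3
section RMono

open FlowMonoid FlowGraph

variable {M : Type u} [FlowMonoid M]

/-- Extension of a partial valuation by `0`. -/
def extOn (X : Finset ℕ) (c : {x : ℕ // x ∈ X} → M) : ℕ → M :=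
  fun y => if h : y ∈ X then c ⟨y, h⟩ else 0

/-- The inner step function, transported to the node set of the composition. -/
noncomputable def FF (h₁ h₂ : FlowGraph M) (cval : {x : ℕ // x ∈ h₂.X} → M) :
    ({x : ℕ // x ∈ (gmul h₁ h₂).X} → M) → {x : ℕ // x ∈ (gmul h₁ h₂).X} → M :=
  fun c x => h₁.stepWith (inCd h₁ h₂ cval) (extOn (gmul h₁ h₂).X c) x.1

variable {h₁ h₂ : FlowGraph M}

lemma FF_mono (cval : {x : ℕ // x ∈ h₂.X} → M) : PMono (FF h₁ h₂ cval) := by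
  intro c d hcd x
  refine h₁.stepWith_mono _ _ _ (fun y => ?_) x.1
  unfold extOn
  by_cases hy : y ∈ (gmul h₁ h₂).X
  · simp only [dif_pos hy]; exact hcd _
  · simp only [dif_neg hy]; exact le_rfl

lemma FF_iter (cval : {x : ℕ // x ∈ h₂.X} → M) :
    ∀ (n : ℕ) (x : {x : ℕ // x ∈ (gmul h₁ h₂).X}),
      ((FF h₁ h₂ cval)^[n] fun _ => 0) x
        = ((h₁.stepWith (inCd h₁ h₂ cval))^[n] fun _ => 0) x.1 := by
  intro n
  induction n with
  | zero => intro x; rfl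
  | succ n ih =>
      intro x
      rw [Function.iterate_succ_apply', Function.iterate_succ_apply']
      show h₁.stepWith (inCd h₁ h₂ cval)
        (extOn (gmul h₁ h₂).X ((FF h₁ h₂ cval)^[n] fun _ => 0)) x.1 = _
      congr 1
      funext y
      unfold extOn
      by_cases hy : y ∈ (gmul h₁ h₂).X
      · rw [dif_pos hy]; exact ih ⟨y, hy⟩
      · rw [dif_neg hy]
        exact (h₁.stepWith_iter_zero _ n fun h =>
          hy (Finset.mem_union_left _ h)).symm

lemma FF_cont_eq (cval : {x : ℕ // x ∈ h₂.X} → M) : PCont (FF h₁ h₂ cval) := by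
  intro Ch hCh x
  have hext : extOn (gmul h₁ h₂).X (fun y => csup fun n => Ch n y)
      = fun y => csup fun n => extOn (gmul h₁ h₂).X (Ch n) y := by
    funext y
    by_cases hy : y ∈ (gmul h₁ h₂).X
    · simp only [extOn, dif_pos hy]
    · simp only [extOn, dif_neg hy, csup_const]
  have hchain : PChain fun n => extOn (gmul h₁ h₂).X (Ch n) := by
    intro n y
    show extOn (gmul h₁ h₂).X (Ch n) y ≤ extOn (gmul h₁ h₂).X (Ch (n + 1)) y
    by_cases hy : y ∈ (gmul h₁ h₂).X
    · simp only [extOn, dif_pos hy]; exact hCh n _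
    · simp only [extOn, dif_neg hy]; exact le_rfl
  show h₁.stepWith _ (extOn (gmul h₁ h₂).X fun y => csup fun n => Ch n y) x.1 = _
  rw [hext, h₁.stepWith_cont _ _ hchain x.1]
  rfl

lemma klFF_eq (cval : {x : ℕ // x ∈ h₂.X} → M) (x : {x : ℕ // x ∈ (gmul h₁ h₂).X}) :
    kleeneOn (FF h₁ h₂ cval) x = h₁.flowWith (inCd h₁ h₂ cval) x.1 :=
  congrArg csup (funext fun n => FF_iter cval n x)

variable {r : M → M → Prop}

lemma rsum (htr : ∀ m n o : M, r m n → r n o → r m o) (h0 : r 0 0)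
    (hadd : ∀ m n o : M, r m n → r (m + o) (n + o))
    {α : Type*} (s : Finset α) (a b : α → M) (h : ∀ y ∈ s, r (a y) (b y)) :
    r (∑ y ∈ s, a y) (∑ y ∈ s, b y) := by
  classical
  induction s using Finset.induction with
  | empty => simpa using h0
  | @insert y s hy ih =>
      rw [Finset.sum_insert hy, Finset.sum_insert hy]
      have h1 : r (a y + ∑ z ∈ s, a z) (b y + ∑ z ∈ s, a z) :=
        hadd _ _ _ (h y (Finset.mem_insert_self y s))
      have h2 : r (b y + ∑ z ∈ s, a z) (b y + ∑ z ∈ s, b z) := by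
        rw [add_comm (b y) (∑ z ∈ s, a z), add_comm (b y) (∑ z ∈ s, b z)]
        exact hadd _ _ _ (ih fun z hz => h z (Finset.mem_insert_of_mem hz))
      exact htr _ _ _ h1 h2

lemma fd_rmono (hmul : MDef h₁ h₂) (hcomp : Compatible r (gmul h₁ h₂)) :
    RMonoOn r h₂.X (fd h₁ h₂) := by
  classical
  obtain ⟨htr, h0, hadd, hC3, hC4⟩ := hcomp
  have hdisj := hmul.1
  have hladd : ∀ m n o : M, r m n → r (o + m) (o + n) := fun m n o h => by
    rw [add_comm o m, add_comm o n]; exact hadd m n o h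
  have hE1 : ∀ z ∈ h₁.X, ∀ (x : ℕ) (m n : M), r m n → r (h₁.E z x m) (h₁.E z x n) := by
    intro z hz x m n hmn
    have h := hC3 z x (Finset.mem_union_left _ hz) m n hmn
    have he : (gmul h₁ h₂).E z x = h₁.E z x := if_pos hz
    rwa [he] at h
  have hE2 : ∀ z ∈ h₂.X, ∀ (x : ℕ) (m n : M), r m n → r (h₂.E z x m) (h₂.E z x n) := by
    intro z hz x m n hmn
    have h := hC3 z x (Finset.mem_union_right _ hz) m n hmn
    have he : (gmul h₁ h₂).E z x = h₂.E z x := if_neg (Finset.disjoint_right.mp hdisj hz)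
    rwa [he] at h
  -- pointwise `r`-monotonicity of the transported inner step function
  have hFFr : ∀ (cval : {x : ℕ // x ∈ h₂.X} → M), RMonoOn r (gmul h₁ h₂).X (FF h₁ h₂ cval) := by
    intro cval c d hcd x
    show r (h₁.stepWith _ (extOn (gmul h₁ h₂).X c) x.1)
      (h₁.stepWith _ (extOn (gmul h₁ h₂).X d) x.1)
    unfold FlowGraph.stepWith
    by_cases hx : x.1 ∈ h₁.X
    · rw [if_pos hx, if_pos hx]
      refine hladd _ _ _ (rsum htr h0 hadd _ _ _ fun y hy => ?_)
      refine hE1 y hy x.1 _ _ ?_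
      unfold extOn
      by_cases hmem : y ∈ (gmul h₁ h₂).X
      · simp only [dif_pos hmem]; exact hcd _
      · simp only [dif_neg hmem]; exact h0
    · rw [if_neg hx, if_neg hx]; exact h0
  -- comparison of the step functions for `r`-related boundary valuations
  have hstepr : ∀ (cval cval' : {x : ℕ // x ∈ h₂.X} → M), (∀ y, r (cval y) (cval' y)) →
      ∀ (c : {x : ℕ // x ∈ (gmul h₁ h₂).X} → M) x,
        r (FF h₁ h₂ cval c x) (FF h₁ h₂ cval' c x) := by
    intro cval cval' hr c x
    show r (h₁.stepWith (inCd h₁ h₂ cval) (extOn (gmul h₁ h₂).X c) x.1)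
      (h₁.stepWith (inCd h₁ h₂ cval') (extOn (gmul h₁ h₂).X c) x.1)
    unfold FlowGraph.stepWith
    by_cases hx : x.1 ∈ h₁.X
    · rw [if_pos hx, if_pos hx, finsum_inCd h₁ h₂ cval x.1, finsum_inCd h₁ h₂ cval' x.1]
      refine hadd _ _ _ (hadd _ _ _ (rsum htr h0 hadd _ _ _ fun y _ => ?_))
      exact hE2 y.1 y.2 x.1 _ _ (hr y)
    · rw [if_neg hx, if_neg hx]; exact h0
  -- the inner flows are `r`-related via (C4)
  have hflowr : ∀ (cval cval' : {x : ℕ // x ∈ h₂.X} → M), (∀ y, r (cval y) (cval' y)) →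
      ∀ z ∈ h₁.X, r (h₁.flowWith (inCd h₁ h₂ cval) z) (h₁.flowWith (inCd h₁ h₂ cval') z) := by
    intro cval cval' hr z hz
    have hcont : ∀ cv, ContOn (gmul h₁ h₂).X (FF h₁ h₂ cv) := by
      intro cv Ch hCh x
      have heq := FF_cont_eq cv Ch hCh x
      rw [show chainJoin Ch = fun y => csup fun n => Ch n y from rfl, heq]
      exact isLUB_csup _ (monotone_nat_of_le_succ fun n =>
        FF_mono cv (Ch n) (Ch (n + 1)) (fun y => hCh n y) x)
    have hiter : ∀ (i : ℕ) (x : {x : ℕ // x ∈ (gmul h₁ h₂).X}),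
        r (((FF h₁ h₂ cval)^[i] fun _ => 0) x) (((FF h₁ h₂ cval')^[i] fun _ => 0) x) := by
      intro i
      induction i with
      | zero => intro x; exact h0
      | succ i ih =>
          intro x
          rw [Function.iterate_succ_apply', Function.iterate_succ_apply']
          exact htr _ _ _ (hstepr cval cval' hr _ x)
            (hFFr cval' _ _ ih x)
    have hlast : ∀ x, r (kleeneOn (FF h₁ h₂ cval) x)
        (FF h₁ h₂ cval' (kleeneOn (FF h₁ h₂ cval)) x) := by
      intro x
      have hfix : FF h₁ h₂ cval (kleeneOn (FF h₁ h₂ cval)) x = kleeneOn (FF h₁ h₂ cval) x :=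
        kl_fixed (FF_mono cval) (FF_cont_eq cval) x
      rw [← hfix]
      exact hstepr cval cval' hr _ x
    have := hC4 (FF h₁ h₂ cval) (FF h₁ h₂ cval') (hcont cval) (hcont cval')
      (hFFr cval) (hFFr cval') hiter hlast ⟨z, Finset.mem_union_left _ hz⟩
    rwa [klFF_eq cval, klFF_eq cval'] at this
  -- conclude
  intro c d hcd x
  unfold fd FlowGraph.tf
  refine htr _ _ _ (hadd _ _ _ (hladd _ _ _ (rsum htr h0 hadd _ _ _ fun z hz =>
    hE1 z hz x.1 _ _ (hflowr c d hcd z hz)))) ?_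
  exact hladd _ _ _ (rsum htr h0 hadd _ _ _ fun y _ => hE2 y.1 y.2 x.1 _ _ (hcd y))

end RMono

open FlowGraph in
/-- Partial fixed-point computation (Bekić-style). For
`h₁ ⋆ h₂` defined, the function `f` that computes one step of the flow of `h₂`
relative to the transfer function of `h₁` (fed with the inflow `in_cval`
induced by the current values `cval` on `h₂`) is monotone and continuous w.r.t.
the pointwise natural order, its Kleene join is its least fixed point and
equals `h₂.flow`; and under `compatible_⪯(h₁ ⋆ h₂)` it is pointwise
`⪯`-monotone. -/
theorem bekic_partial_fixed_point (h₁ h₂ : FlowGraph M) (hmul : MDef h₁ h₂)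
    (inC : ({x : ℕ // x ∈ h₂.X} → M) → ℕ → ℕ → M)
    (hinC : ∀ (cval : {x : ℕ // x ∈ h₂.X} → M) (x y : ℕ),
      inC cval x y =
        if hx : x ∈ h₂.X then h₂.E x y (cval ⟨x, hx⟩) else (gmul h₁ h₂).inflow x y)
    (f : ({x : ℕ // x ∈ h₂.X} → M) → ({x : ℕ // x ∈ h₂.X} → M))
    (hf : ∀ (cval : {x : ℕ // x ∈ h₂.X} → M) (x : {x : ℕ // x ∈ h₂.X}),
      f cval x =
        (∑ᶠ z, (gmul h₁ h₂).inflow z x.1) + h₁.tf (inC cval) x.1 +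
          ∑ y ∈ h₂.X.attach, h₂.E y.1 x.1 (cval y)) :
    MonoOn h₂.X f ∧ ContOn h₂.X f ∧
    (∀ x, f (kleeneOn f) x = kleeneOn f x) ∧
    (∀ c : {x : ℕ // x ∈ h₂.X} → M, (∀ x, f c x = c x) → ∀ x, kleeneOn f x ≤ c x) ∧
    (∀ x : {x : ℕ // x ∈ h₂.X}, h₂.flow x.1 = kleeneOn f x) ∧
    (∀ r : M → M → Prop, Compatible r (gmul h₁ h₂) → RMonoOn r h₂.X f) := by
  have hdisj : Disjoint h₁.X h₂.X := hmul.1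
  have hinC' : inC = inCd h₁ h₂ := by
    funext cval x y
    exact hinC cval x y
  subst hinC'
  have hf' : f = fd h₁ h₂ := by
    funext cval x
    exact hf cval x
  subst hf'
  refine ⟨fd_mono, ?_, fun x => kl_fixed fd_pmono (fd_pcont hdisj) x,
    fun c hc x => kl_least fd_pmono (fun y => le_of_eq (hc y)) x,
    fun x => bekic hmul x, fun r hcomp => fd_rmono hmul hcomp⟩
  intro Ch hCh x
  have heq : fd h₁ h₂ (chainJoin Ch) x = FlowMonoid.csup fun n => fd h₁ h₂ (Ch n) x :=
    fd_cont_eq hdisj Ch hCh x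
  rw [heq]
  exact FlowMonoid.isLUB_csup _ (monotone_nat_of_le_succ fun n =>
    fd_mono (Ch n) (Ch (n + 1)) (fun y => hCh n y) x)
end
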